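/- If a utility vector u Lorenz dominates every utility vector in a set S containing u, then u is leximin-optimal within S: there is no w ∈ S whose ascending-sorted vector is lexicographically greater than that of u. -/

import Mathlib

/-- The utility vector sorted in ascending order. -/
def sortedAsc {n : ℕ} (u : Fin n → ℕ) : List ℕ :=
  Multiset.sort (Multiset.ofList (List.ofFn u)) (· ≤ ·)

/-- `u` Lorenz dominates `w`: every prefix sum of the ascending sort of `u`
is at least the corresponding prefix sum for `w`. -/
def LorenzDom {n : ℕ} (u w : Fin n → ℕ) : Prop :=
  ∀ k ≤ n, ((sortedAsc w).take k).sum ≤ ((sortedAsc u).take k).sum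

theorem lorenzDom_leximin_optimal {n : ℕ} (S : Set (Fin n → ℕ))
    (u : Fin n → ℕ) (hu : u ∈ S) (hdom : ∀ w ∈ S, LorenzDom u w) :
    ∀ w ∈ S, ¬ List.Lex (· < ·) (sortedAsc u) (sortedAsc w) := by
  have key : ∀ (a b : List ℕ), List.Lex (· < ·) a b → a.length = b.length →
      ∃ k ≤ a.length, (a.take k).sum < (b.take k).sum := by
    intro a b h
    induction h with
    | nil => intro hl; simp at hl
    | @cons x as bs _ ih =>
        intro hl
        simp at hl
        obtain ⟨k, hk, hlt⟩ := ih hl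
        exact ⟨k + 1, by simpa using hk, by simpa using hlt⟩
    | @rel x y as bs hxy =>
        intro _
        exact ⟨1, by simp, by simpa using hxy⟩
  intro w hw hlex
  have hlen : (sortedAsc u).length = (sortedAsc w).length := by
    simp [sortedAsc]
  obtain ⟨k, hk, hlt⟩ := key _ _ hlex hlen
  have hkn : k ≤ n := by
    have : (sortedAsc u).length = n := by simp [sortedAsc]
    omega
  exact absurd (hdom w hw k hkn) (not_le.mpr hlt)
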